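/- Let p be an odd prime and let A = {−(p−1)/2, −(p−3)/2, …, (p−1)/2} viewed as a subset of Z/p²Z. Then the number of ordered pairs (a,b) ∈ A × A with a + b (mod p²) not in A is exactly (p² − 1)/4. Hence the probability of a carry when adding two uniform independent balanced digits base p is (p² − 1)/(4p²). -/

import Mathlib

theorem balanced_digits_carry_count_and_prob (p : ℕ) (hp : p.Prime) (hodd : Odd p)
    (A : Finset (ZMod (p ^ 2)))
    (hA : A = (Finset.Icc (-(((p : ℤ) - 1) / 2)) (((p : ℤ) - 1) / 2)).image
      (fun i : ℤ => (i : ZMod (p ^ 2)))) :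
    ((A ×ˢ A).filter (fun ab => ab.1 + ab.2 ∉ A)).card = (p ^ 2 - 1) / 4 ∧
    (((A ×ˢ A).filter (fun ab => ab.1 + ab.2 ∉ A)).card : ℚ) / (p ^ 2 : ℚ) =
      ((p : ℚ) ^ 2 - 1) / (4 * (p : ℚ) ^ 2) := by
  obtain ⟨k, hk⟩ := hodd
  have hk1 : 1 ≤ k := by have := hp.two_le; omega
  have hpz : (p : ℤ) = 2 * k + 1 := by exact_mod_cast hk
  have hm : (((p : ℤ) - 1) / 2) = (k : ℤ) := by omega
  set S : Finset ℤ := Finset.Icc (-(k : ℤ)) (k : ℤ) with hS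
  have hA' : A = S.image (fun i : ℤ => (i : ZMod (p ^ 2))) := by rw [hA, hm]
  -- injectivity of the cast on small integers
  have hpsq : ((p : ℤ)) ^ 2 = 4 * k ^ 2 + 4 * k + 1 := by rw [hpz]; ring
  have hinj : ∀ i j : ℤ, |i - j| < (p : ℤ) ^ 2 →
      ((i : ZMod (p ^ 2)) = (j : ZMod (p ^ 2))) → i = j := by
    intro i j hlt hij
    have h := (ZMod.intCast_eq_intCast_iff i j (p ^ 2)).mp hij
    have hd : ((p : ℤ) ^ 2) ∣ i - j := by
      have h2 := h.dvd
      push_cast at h2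
      exact dvd_sub_comm.mp h2
    have := Int.eq_zero_of_abs_lt_dvd hd hlt
    omega
  -- membership in A for integers of absolute value ≤ 2k
  have hmem : ∀ i : ℤ, -(2 * (k : ℤ)) ≤ i → i ≤ 2 * (k : ℤ) →
      (((i : ZMod (p ^ 2)) ∈ A) ↔ i ∈ S) := by
    intro i h1 h2
    rw [hA']
    simp only [Finset.mem_image, hS, Finset.mem_Icc]
    constructor
    · rintro ⟨j, ⟨hj1, hj2⟩, hji⟩
      have : j = i := hinj j i (by rw [abs_lt]; constructor <;> nlinarith) hji
      omega
    · intro hi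
      exact ⟨i, by omega, rfl⟩
  -- the integer-pair count
  have hfib : ∀ i ∈ S, (S.filter (fun j => i + j ∉ S)).card = i.natAbs := by
    intro i hi
    simp only [hS, Finset.mem_Icc] at hi
    have hsub : S.filter (fun j => i + j ∈ S) ⊆ S := Finset.filter_subset _ _
    have hcardS : S.card = 2 * k + 1 := by
      rw [hS, Int.card_Icc]; omega
    rw [Finset.filter_not, Finset.card_sdiff_of_subset hsub, hcardS]
    rcases le_total 0 i with hi0 | hi0
    · have : S.filter (fun j => i + j ∈ S) = Finset.Icc (-(k : ℤ)) ((k : ℤ) - i) := by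
        ext j; simp only [Finset.mem_filter, hS, Finset.mem_Icc]; omega
      rw [this, Int.card_Icc]; omega
    · have : S.filter (fun j => i + j ∈ S) = Finset.Icc (-(k : ℤ) - i) (k : ℤ) := by
        ext j; simp only [Finset.mem_filter, hS, Finset.mem_Icc]; omega
      rw [this, Int.card_Icc]; omega
  have hsumabs : ∀ n : ℕ, ∑ i ∈ Finset.Icc (-(n : ℤ)) (n : ℤ), i.natAbs = n * (n + 1) := by
    intro n
    induction n with
    | zero => simp
    | succ n ih =>
      have hset : Finset.Icc (-(n + 1 : ℤ)) ((n : ℤ) + 1) =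
          insert (-(n + 1 : ℤ)) (insert ((n : ℤ) + 1) (Finset.Icc (-(n : ℤ)) (n : ℤ))) := by
        ext j
        simp only [Finset.mem_insert, Finset.mem_Icc]
        omega
      push_cast [hset]
      rw [Finset.sum_insert (by simp only [Finset.mem_insert, Finset.mem_Icc]; omega),
        Finset.sum_insert (by simp only [Finset.mem_Icc]; omega), ih]
      simp only [Int.natAbs_neg]
      rw [show ((n : ℤ) + 1).natAbs = n + 1 by omega]
      ring
  -- product filter as biUnion
  have hbi : (S ×ˢ S).filter (fun ij : ℤ × ℤ => ij.1 + ij.2 ∉ S) =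
      S.biUnion (fun i => (S.filter (fun j => i + j ∉ S)).image (fun j => (i, j))) := by
    ext ⟨a, b⟩
    simp only [Finset.mem_filter, Finset.mem_product, Finset.mem_biUnion, Finset.mem_image,
      Prod.mk.injEq]
    constructor
    · rintro ⟨⟨ha, hb⟩, hab⟩
      exact ⟨a, ha, b, ⟨hb, hab⟩, rfl, rfl⟩
    · rintro ⟨i, hi, j, ⟨hj, hij⟩, rfl, rfl⟩
      exact ⟨⟨hi, hj⟩, hij⟩
  have hZcount : ((S ×ˢ S).filter (fun ij : ℤ × ℤ => ij.1 + ij.2 ∉ S)).card = k * (k + 1) := by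
    rw [hbi, Finset.card_biUnion]
    · calc (∑ i ∈ S, ((S.filter (fun j => i + j ∉ S)).image (fun j => (i, j))).card)
          = ∑ i ∈ S, i.natAbs := by
            refine Finset.sum_congr rfl fun i hi => ?_
            rw [Finset.card_image_of_injective _ (fun a b h => (Prod.mk.injEq _ _ _ _).mp h |>.2),
              hfib i hi]
        _ = k * (k + 1) := hsumabs k
    · intro i _ j _ hij
      simp only [Finset.disjoint_left, Finset.mem_image]
      rintro ⟨a, b⟩ ⟨x, _, h1⟩ ⟨y, _, h2⟩
      apply hij
      rw [Prod.mk.injEq] at h1 h2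
      omega
  -- transfer to ZMod
  have hset : (A ×ˢ A).filter (fun ab => ab.1 + ab.2 ∉ A) =
      ((S ×ˢ S).filter (fun ij : ℤ × ℤ => ij.1 + ij.2 ∉ S)).image
        (fun ij : ℤ × ℤ => ((ij.1 : ZMod (p ^ 2)), (ij.2 : ZMod (p ^ 2)))) := by
    ext ⟨a, b⟩
    simp only [Finset.mem_filter, Finset.mem_product, Finset.mem_image, Prod.mk.injEq]
    constructor
    · rintro ⟨⟨ha, hb⟩, hab⟩
      rw [hA'] at ha hb
      obtain ⟨i, hi, rfl⟩ := Finset.mem_image.mp ha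
      obtain ⟨j, hj, rfl⟩ := Finset.mem_image.mp hb
      simp only [hS, Finset.mem_Icc] at hi hj
      refine ⟨(i, j), ⟨⟨by simp [hS, Finset.mem_Icc]; omega, by simp [hS, Finset.mem_Icc]; omega⟩, ?_⟩, rfl, rfl⟩
      intro hijS
      apply hab
      rw [← Int.cast_add]
      exact (hmem (i + j) (by omega) (by omega)).mpr hijS
    · rintro ⟨⟨i, j⟩, ⟨⟨hi, hj⟩, hij⟩, rfl, rfl⟩
      simp only [hS, Finset.mem_Icc] at hi hj
      refine ⟨⟨?_, ?_⟩, ?_⟩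
      · rw [hA']; exact Finset.mem_image_of_mem _ (by simp [hS, Finset.mem_Icc]; omega)
      · rw [hA']; exact Finset.mem_image_of_mem _ (by simp [hS, Finset.mem_Icc]; omega)
      · rw [← Int.cast_add]
        intro hmemA
        exact hij ((hmem (i + j) (by omega) (by omega)).mp hmemA)
  have hcard : ((A ×ˢ A).filter (fun ab => ab.1 + ab.2 ∉ A)).card = k * (k + 1) := by
    rw [hset, Finset.card_image_of_injOn, hZcount]
    rintro ⟨i, j⟩ hij ⟨i', j'⟩ hij' heq
    simp only [Finset.mem_coe, Finset.mem_filter, Finset.mem_product, hS, Finset.mem_Icc] at hij hij'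
    rw [Prod.mk.injEq] at heq
    have h1 : i = i' := hinj i i' (by rw [abs_lt]; constructor <;> nlinarith [hij.1.1, hij'.1.1]) heq.1
    have h2 : j = j' := hinj j j' (by rw [abs_lt]; constructor <;> nlinarith [hij.1.2, hij'.1.2]) heq.2
    simp [h1, h2]
  have hpsqn : p ^ 2 = 4 * (k * (k + 1)) + 1 := by subst hk; ring
  constructor
  · rw [hcard]; omega
  · rw [hcard]
    have hp0 : (p : ℚ) ≠ 0 := Nat.cast_ne_zero.mpr hp.pos.ne'
    have hpq : (p : ℚ) = 2 * k + 1 := by exact_mod_cast congrArg (Nat.cast : ℕ → ℚ) hk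
    field_simp
    rw [hpq]
    push_cast
    ring
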